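/- Define h(R,ε) = (R+ε)^d · B_{1-R²/(R+ε)²}((d-1)/2, (d+1)/2)/B((d-1)/2, 1/2) - R^d · I_{1-R²/(R+ε)²}((d-1)/2, 1/2), where B_x(a,b) is the incomplete beta function and I_x(a,b) = B_x(a,b)/B(a,b). Then for every fixed ε > 0 and integer d ≥ 2, h(R,ε) → ∞ as R → ∞. -/

import Mathlib

open Real Filter

/-- Incomplete beta function `B_x(a,b) = ∫₀^x t^(a-1) (1-t)^(b-1) dt`. -/
noncomputable def incBeta (x a b : ℝ) : ℝ :=
  ∫ t in (0:ℝ)..x, t ^ (a - 1) * (1 - t) ^ (b - 1)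

/-- Regularized incomplete beta function `I_x(a,b) = B_x(a,b)/B(a,b)`. -/
noncomputable def regBeta (x a b : ℝ) : ℝ := incBeta x a b / incBeta 1 a b

noncomputable def h (d : ℕ) (R eps : ℝ) : ℝ :=
  (R + eps) ^ d * incBeta (1 - R ^ 2 / (R + eps) ^ 2) (((d : ℝ) - 1) / 2) (((d : ℝ) + 1) / 2)
      / incBeta 1 (((d : ℝ) - 1) / 2) (1 / 2)
    - R ^ d * regBeta (1 - R ^ 2 / (R + eps) ^ 2) (((d : ℝ) - 1) / 2) (1 / 2)

open MeasureTheory intervalIntegral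

lemma auxInt {p q x : ℝ} (hp : -1 < p) (hx0 : 0 ≤ x) (hx1 : x < 1) :
    IntervalIntegrable (fun t => t ^ p * (1 - t) ^ q) volume 0 x := by
  apply IntervalIntegrable.mul_continuousOn (intervalIntegral.intervalIntegrable_rpow' hp)
  apply ContinuousOn.rpow_const (continuousOn_const.sub continuousOn_id)
  intro t ht
  rw [Set.uIcc_of_le hx0] at ht
  refine Or.inl ?_
  simp only [Pi.sub_apply, id_eq]
  have := ht.2
  nlinarith


lemma bern {u xx p : ℝ} (hu : 0 < u) (hxu : xx = 1 - u) (hx : 0 < xx) (hp : 1 ≤ p) :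
    u^p + p * u^(p - 1) * (xx/2) ≤ (1 - xx/2)^p := by
  have hq : (0:ℝ) ≤ (xx/2)/u := by positivity
  have hb := one_add_mul_self_le_rpow_one_add (by linarith : (-1:ℝ) ≤ (xx/2)/u) hp
  have hmul := mul_le_mul_of_nonneg_left hb (Real.rpow_nonneg hu.le p)
  have hid1 : u^p * (1 + (xx/2)/u)^p = (1 - xx/2)^p := by
    rw [← Real.mul_rpow hu.le (by positivity)]
    congr 1
    have h6 : u * ((xx/2)/u) = xx/2 := by field_simp
    calc u * (1 + (xx/2)/u) = u + u * ((xx/2)/u) := by ring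
      _ = u + xx/2 := by rw [h6]
      _ = 1 - xx/2 := by rw [hxu]; ring
  have hid2 : u^p * (1 + p * ((xx/2)/u)) = u^p + p * u^(p - 1) * (xx/2) := by
    have h7 : u^(p - 1) = u^p / u := by rw [Real.rpow_sub hu, Real.rpow_one]
    rw [h7]
    have h8 : u^p * (p * ((xx/2)/u)) = p * (u^p/u) * (xx/2) := by
      field_simp
    calc u^p * (1 + p * ((xx/2)/u)) = u^p + u^p * (p * ((xx/2)/u)) := by ring
      _ = u^p + p * (u^p/u) * (xx/2) := by rw [h8]
  rw [hid1, hid2] at hmul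
  exact hmul

set_option maxHeartbeats 1000000 in
lemma core (d : ℕ) (hd : 2 ≤ d) (eps R : ℝ) (heps : 0 < eps) (hR1 : 1 ≤ R) (hRe : eps ≤ R) :
    (d * eps * (eps/4) ^ (((d:ℝ)-1)/2) / (8 * (((d:ℝ)-1)/2))) * R ^ ((1:ℝ)/2) ≤
      (R + eps) ^ d * incBeta (1 - R ^ 2 / (R + eps) ^ 2) (((d : ℝ) - 1) / 2) (((d : ℝ) + 1) / 2)
        - R ^ d * incBeta (1 - R ^ 2 / (R + eps) ^ 2) (((d : ℝ) - 1) / 2) (1 / 2) := by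
  have hd2 : (2:ℝ) ≤ (d:ℝ) := by exact_mod_cast hd
  obtain ⟨a, ha_def⟩ : ∃ a' : ℝ, a' = ((d:ℝ)-1)/2 := ⟨_, rfl⟩
  rw [← ha_def]
  have ha : (1:ℝ)/2 ≤ a := by rw [ha_def]; linarith
  have ha0 : 0 < a := by linarith
  have hR0 : 0 < R := by linarith
  obtain ⟨s, hs_def⟩ : ∃ s' : ℝ, s' = R + eps := ⟨_, rfl⟩
  rw [← hs_def]
  have hs0 : 0 < s := by rw [hs_def]; positivity
  have hRs : R < s := by rw [hs_def]; linarith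
  obtain ⟨x, hx_def⟩ : ∃ x' : ℝ, x' = 1 - R^2/s^2 := ⟨_, rfl⟩
  rw [← hx_def]
  have hu1 : R^2/s^2 < 1 := by
    rw [div_lt_one (by positivity)]
    nlinarith
  have hu0 : 0 < R^2/s^2 := by positivity
  have hx0 : 0 < x := by rw [hx_def]; linarith
  have hx1 : x < 1 := by rw [hx_def]; linarith
  -- key rpow identities
  have hus : R^2/s^2 = (R/s)^2 := by rw [div_pow]
  have hRsd : ∀ y : ℝ, (R^2/s^2) ^ y = (R/s) ^ (2*y) := by
    intro y
    rw [hus, ← Real.rpow_natCast (R/s) 2, ← Real.rpow_mul (by positivity)]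
    norm_num
  have idA : s^d * (R^2/s^2) ^ ((d:ℝ)/2) = R^d := by
    rw [hRsd]
    have : 2 * ((d:ℝ)/2) = (d:ℝ) := by ring
    rw [this, Real.rpow_natCast, div_pow]
    field_simp
  have idB : s^d * (R^2/s^2) ^ ((d:ℝ)/2 - 1) = s^2 * R^(d-2) := by
    rw [hRsd]
    have h1 : 2 * ((d:ℝ)/2 - 1) = ((d:ℝ) - 2) := by ring
    have h2 : ((d:ℝ) - 2) = ((d - 2 : ℕ) : ℝ) := by
      rw [Nat.cast_sub hd]; norm_num
    rw [h1, h2, Real.rpow_natCast, div_pow]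
    have h3 : s ^ d = s ^ (d-2) * s ^ 2 := by
      rw [← pow_add]; congr 1; omega
    rw [h3]
    field_simp
  -- the inner function G
  obtain ⟨G, hG_def⟩ : ∃ G' : ℝ → ℝ, G' = fun t => s^d * (1-t)^a - R^d * (1-t)^((1:ℝ)/2-1) :=
    ⟨_, rfl⟩
  -- pointwise nonnegativity of G on [0,x]
  have hGfact : ∀ t ∈ Set.Icc (0:ℝ) x, G t = (1-t)^((1:ℝ)/2-1) * (s^d * (1-t)^((d:ℝ)/2) - R^d) := by
    intro t ht
    have h1t : 0 < 1 - t := by nlinarith [ht.2]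
    simp only [hG_def]
    have he : (1-t)^a = (1-t)^((1:ℝ)/2-1) * (1-t)^((d:ℝ)/2) := by
      rw [← Real.rpow_add h1t]
      congr 1
      rw [ha_def]; ring
    rw [he]
    ring
  have hGnn : ∀ t ∈ Set.Icc (0:ℝ) x, 0 ≤ G t := by
    intro t ht
    rw [hGfact t ht]
    have h1t : 0 < 1 - t := by nlinarith [ht.2]
    have h2 : R^2/s^2 ≤ 1 - t := by
      have := ht.2; rw [hx_def] at this; linarith
    have h3 : R^d ≤ s^d * (1-t)^((d:ℝ)/2) := by
      rw [← idA]
      exact mul_le_mul_of_nonneg_left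
        (Real.rpow_le_rpow hu0.le h2 (by positivity : (0:ℝ) ≤ (d:ℝ)/2))
        (pow_nonneg hs0.le d)
    have h4 : (0:ℝ) ≤ (1-t)^((1:ℝ)/2-1) := Real.rpow_nonneg h1t.le _
    exact mul_nonneg h4 (by linarith)
  -- lower bound for G on [0, x/2]
  obtain ⟨m, hm_def⟩ : ∃ m' : ℝ, m' = ((d:ℝ)/4) * x * s^2 * R^(d-2) := ⟨_, rfl⟩
  have hGlb : ∀ t ∈ Set.Icc (0:ℝ) (x/2), m ≤ G t := by
    intro t ht
    have htx : t ∈ Set.Icc (0:ℝ) x := ⟨ht.1, by nlinarith [ht.2, hx0]⟩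
    have h1t : 0 < 1 - t := by nlinarith [htx.2]
    have h1t1 : 1 - t ≤ 1 := by linarith [ht.1]
    rw [hGfact t htx]
    -- (1-t)^(1/2-1) ≥ 1
    have hge1 : 1 ≤ (1-t)^((1:ℝ)/2-1) :=
      Real.one_le_rpow_of_pos_of_le_one_of_nonpos h1t h1t1 (by norm_num)
    -- Bernoulli : (1 - x/2)^(d/2) >= u^(d/2) + (d/2) u^(d/2-1) (x/2)
    have hBern : (R^2/s^2)^((d:ℝ)/2) + ((d:ℝ)/2) * (R^2/s^2)^((d:ℝ)/2 - 1) * (x/2)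
        ≤ (1 - x/2)^((d:ℝ)/2) :=
      bern hu0 (by rw [hx_def]) hx0 (by linarith)
    -- now bound
    have hmono : (1 - x/2)^((d:ℝ)/2) ≤ (1-t)^((d:ℝ)/2) := by
      apply Real.rpow_le_rpow (by linarith) (by linarith [ht.2]) (by positivity)
    have hP : m + R^d ≤ s^d * (1-t)^((d:ℝ)/2) := by
      have h5 : s^d * ((R^2/s^2)^((d:ℝ)/2) + ((d:ℝ)/2) * (R^2/s^2)^((d:ℝ)/2 - 1) * (x/2)) ≤
          s^d * (1-t)^((d:ℝ)/2) :=
        mul_le_mul_of_nonneg_left (hBern.trans hmono) (pow_nonneg hs0.le d)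
      have e : s^d * ((R^2/s^2)^((d:ℝ)/2) + ((d:ℝ)/2) * (R^2/s^2)^((d:ℝ)/2 - 1) * (x/2)) =
          s^d * (R^2/s^2)^((d:ℝ)/2) + ((d:ℝ)/2) * (s^d * (R^2/s^2)^((d:ℝ)/2 - 1)) * (x/2) := by ring
      rw [e, idA, idB] at h5
      rw [hm_def]
      linarith
    have hPnn : 0 ≤ s^d * (1-t)^((d:ℝ)/2) - R^d := by
      have hmnn : 0 ≤ m := by rw [hm_def]; positivity
      linarith
    calc m ≤ s^d * (1-t)^((d:ℝ)/2) - R^d := by linarith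
      _ ≤ (1-t)^((1:ℝ)/2-1) * (s^d * (1-t)^((d:ℝ)/2) - R^d) := le_mul_of_one_le_left hPnn hge1
  -- integrability and integral identities
  have hb1 : ((d:ℝ)+1)/2 - 1 = a := by rw [ha_def]; ring
  have hInt1 : IntervalIntegrable (fun t => t^(a-1) * (1-t)^a) volume 0 x :=
    auxInt (by linarith) hx0.le hx1
  have hInt2 : IntervalIntegrable (fun t => t^(a-1) * (1-t)^((1:ℝ)/2-1)) volume 0 x :=
    auxInt (by linarith) hx0.le hx1
  have hIntG : IntervalIntegrable (fun t => t^(a-1) * G t) volume 0 x := by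
    apply (((hInt1.const_mul (s^d)).sub (hInt2.const_mul (R^d))).congr)
    intro t _
    simp only [hG_def]
    ring
  have hB1 : incBeta x a (((d:ℝ)+1)/2) = ∫ t in (0:ℝ)..x, t^(a-1) * (1-t)^a := by
    rw [incBeta, hb1]
  have hB2 : incBeta x a (1/2) = ∫ t in (0:ℝ)..x, t^(a-1) * (1-t)^((1:ℝ)/2-1) := rfl
  have hN : s^d * incBeta x a (((d:ℝ)+1)/2) - R^d * incBeta x a (1/2)
      = ∫ t in (0:ℝ)..x, t^(a-1) * G t := by
    rw [hB1, hB2, ← intervalIntegral.integral_const_mul, ← intervalIntegral.integral_const_mul,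
      ← intervalIntegral.integral_sub (hInt1.const_mul _) (hInt2.const_mul _)]
    apply intervalIntegral.integral_congr
    intro t _
    simp only [hG_def]
    ring
  -- split the integral
  have hx2 : (0:ℝ) ≤ x/2 := by linarith
  have hIntG1 : IntervalIntegrable (fun t => t^(a-1) * G t) volume 0 (x/2) :=
    hIntG.mono_set (by
      rw [Set.uIcc_of_le hx2, Set.uIcc_of_le hx0.le]
      exact Set.Icc_subset_Icc le_rfl (by linarith))
  have hIntG2 : IntervalIntegrable (fun t => t^(a-1) * G t) volume (x/2) x :=
    hIntG.mono_set (by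
      rw [Set.uIcc_of_le (by linarith : x/2 ≤ x), Set.uIcc_of_le hx0.le]
      exact Set.Icc_subset_Icc hx2 le_rfl)
  have hsplit : (∫ t in (0:ℝ)..x, t^(a-1) * G t)
      = (∫ t in (0:ℝ)..(x/2), t^(a-1) * G t) + ∫ t in (x/2)..x, t^(a-1) * G t :=
    (intervalIntegral.integral_add_adjacent_intervals hIntG1 hIntG2).symm
  have hpos2 : 0 ≤ ∫ t in (x/2)..x, t^(a-1) * G t := by
    apply intervalIntegral.integral_nonneg (by linarith : x/2 ≤ x)
    intro t ht
    exact mul_nonneg (Real.rpow_nonneg (le_trans hx2 ht.1) _)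
      (hGnn t ⟨le_trans hx2 ht.1, ht.2⟩)
  have hmona : (∫ t in (0:ℝ)..(x/2), t^(a-1) * m) ≤ ∫ t in (0:ℝ)..(x/2), t^(a-1) * G t := by
    apply intervalIntegral.integral_mono_on hx2
      ((intervalIntegral.intervalIntegrable_rpow' (by linarith : (-1:ℝ) < a-1)).mul_const m)
      hIntG1
    intro t ht
    exact mul_le_mul_of_nonneg_left (hGlb t ht) (Real.rpow_nonneg ht.1 _)
  have hval : (∫ t in (0:ℝ)..(x/2), t^(a-1) * m) = (x/2)^a/a * m := by
    rw [intervalIntegral.integral_mul_const, integral_rpow (Or.inl (by linarith : (-1:ℝ) < a-1))]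
    have e3 : a - 1 + 1 = a := by ring
    rw [e3, Real.zero_rpow (ne_of_gt ha0)]
    ring
  -- final lower bound on (x/2)^a/a * m
  have hs2 : R^2 ≤ s^2 := by nlinarith
  have h1' : eps ≤ x * (2*R) := by
    have h9 : x = eps*(2*R+eps)/(R+eps)^2 := by
      rw [hx_def, hs_def]
      field_simp
      ring
    rw [h9, div_mul_eq_mul_div, le_div_iff₀ (by positivity)]
    have he2 : eps^2 ≤ R^2 := by nlinarith
    nlinarith [mul_nonneg heps.le (sub_nonneg.2 he2), mul_nonneg heps.le (sq_nonneg R)]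
  have hEP : (eps/4)^a ≤ (x/2)^a * R^a := by
    have h10 : eps/4 ≤ (x/2) * R := by nlinarith
    calc (eps/4)^a ≤ ((x/2)*R)^a :=
          Real.rpow_le_rpow (by positivity) h10 ha0.le
      _ = (x/2)^a * R^a := Real.mul_rpow (by linarith) (by linarith)
  have hQP : R^((1:ℝ)/2) ≤ R^a := Real.rpow_le_rpow_of_exponent_le hR1 ha
  have hKey : R^a * R^a ≤ R^(d-2) * R := by
    have e4 : R^a * R^a = R^(a+a) := (Real.rpow_add hR0 _ _).symm
    have e5 : a + a = ((d-1:ℕ):ℝ) := by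
      rw [ha_def, Nat.cast_sub (by omega : 1 ≤ d)]
      push_cast
      ring
    have e6 : R^(d-1) = R^(d-2) * R := by
      rw [← pow_succ]
      congr 1
      omega
    rw [e4, e5, Real.rpow_natCast, e6]
  have hWnn : (0:ℝ) ≤ (x/2)^a := Real.rpow_nonneg (by linarith) _
  have hEnn : (0:ℝ) ≤ (eps/4)^a := Real.rpow_nonneg (by positivity) _
  have hQnn : (0:ℝ) ≤ R^((1:ℝ)/2) := Real.rpow_nonneg hR0.le _
  have hPnn : (0:ℝ) ≤ R^a := Real.rpow_nonneg hR0.le _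
  have hKnn : (0:ℝ) ≤ R^(d-2) := pow_nonneg hR0.le _
  have hmain : eps * (eps/4)^a * R^((1:ℝ)/2) ≤ 2*((x/2)^a * x * s^2 * R^(d-2)) := by
    calc eps * (eps/4)^a * R^((1:ℝ)/2)
        ≤ (x*(2*R)) * (eps/4)^a * R^((1:ℝ)/2) := by
          apply mul_le_mul_of_nonneg_right (mul_le_mul_of_nonneg_right h1' hEnn) hQnn
      _ ≤ (x*(2*R)) * ((x/2)^a * R^a) * R^((1:ℝ)/2) := by
          apply mul_le_mul_of_nonneg_right (mul_le_mul_of_nonneg_left hEP (by positivity)) hQnn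
      _ ≤ (x*(2*R)) * ((x/2)^a * R^a) * R^a := by
          apply mul_le_mul_of_nonneg_left hQP (by positivity)
      _ = (2*x*(x/2)^a) * (R^a * R^a) * R := by ring
      _ ≤ (2*x*(x/2)^a) * (R^(d-2) * R) * R := by
          apply mul_le_mul_of_nonneg_right (mul_le_mul_of_nonneg_left hKey (by positivity)) hR0.le
      _ = (2*x*(x/2)^a*R^(d-2)) * R^2 := by ring
      _ ≤ (2*x*(x/2)^a*R^(d-2)) * s^2 := by
          apply mul_le_mul_of_nonneg_left hs2 (by positivity)
      _ = 2*((x/2)^a * x * s^2 * R^(d-2)) := by ring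
  have hfin : (d * eps * (eps/4)^a / (8*a)) * R^((1:ℝ)/2) ≤ (x/2)^a/a * m := by
    calc (d * eps * (eps/4)^a / (8*a)) * R^((1:ℝ)/2)
        = ((d:ℝ)/(8*a)) * (eps * (eps/4)^a * R^((1:ℝ)/2)) := by ring
      _ ≤ ((d:ℝ)/(8*a)) * (2*((x/2)^a * x * s^2 * R^(d-2))) := by
          apply mul_le_mul_of_nonneg_left hmain (by positivity)
      _ = (x/2)^a/a * (((d:ℝ)/4) * x * s^2 * R^(d-2)) := by ring
      _ = (x/2)^a/a * m := by rw [hm_def]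
  calc (d * eps * (eps/4)^a / (8*a)) * R^((1:ℝ)/2)
      ≤ (x/2)^a/a * m := hfin
    _ = ∫ t in (0:ℝ)..(x/2), t^(a-1) * m := hval.symm
    _ ≤ ∫ t in (0:ℝ)..(x/2), t^(a-1) * G t := hmona
    _ ≤ ∫ t in (0:ℝ)..x, t^(a-1) * G t := by rw [hsplit]; linarith
    _ = s^d * incBeta x a (((d:ℝ)+1)/2) - R^d * incBeta x a (1/2) := hN.symm


open MeasureTheory intervalIntegral

lemma auxInt1 {p q : ℝ} (hp : -1 < p) (hq : -1 < q) :
    IntervalIntegrable (fun t => t ^ p * (1 - t) ^ q) volume 0 1 := by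
  have h1 : IntervalIntegrable (fun t => t ^ p * (1 - t) ^ q) volume 0 (1/2) :=
    auxInt hp (by norm_num) (by norm_num)
  have h2 : IntervalIntegrable (fun t : ℝ => t ^ q * (1 - t) ^ p) volume 0 (1/2) :=
    auxInt hq (by norm_num) (by norm_num)
  have h3 := (h2.comp_sub_left 1).symm
  norm_num at h3
  refine h1.trans (a := 0) (b := 1/2) (c := 1) ?_
  apply h3.congr
  intro t _
  ring_nf

/-- Positivity of the complete Beta. -/
lemma betaPos {p q : ℝ} (hp : 0 < p) (hq : 0 < q) : 0 < incBeta 1 p q := by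
  have hint : IntervalIntegrable (fun t => t ^ (p-1) * (1 - t) ^ (q-1)) volume 0 1 :=
    auxInt1 (by linarith) (by linarith)
  refine intervalIntegral.intervalIntegral_pos_of_pos_on hint ?_ one_pos
  intro t ht
  have h1 : 0 < t := ht.1
  have h2 : 0 < 1 - t := by linarith [ht.2]
  positivity

theorem stmt16 (d : ℕ) (hd : 2 ≤ d) (eps : ℝ) (heps : 0 < eps) :
    Tendsto (fun R => h d R eps) atTop atTop := by
  set a : ℝ := ((d:ℝ)-1)/2 with ha_def
  have hd2 : (2:ℝ) ≤ (d:ℝ) := by exact_mod_cast hd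
  have ha : (1:ℝ)/2 ≤ a := by rw [ha_def]; linarith
  have ha0 : 0 < a := by linarith
  have hC : 0 < incBeta 1 a (1/2) := betaPos ha0 (by norm_num)
  set C := incBeta 1 a (1/2) with hC_def
  set c0 : ℝ := d * eps * (eps/4) ^ a / (8 * a) with hc0_def
  have hc0 : 0 < c0 := by
    rw [hc0_def]
    have : (0:ℝ) < d := by positivity
    positivity
  have hlim : Tendsto (fun R : ℝ => (c0 / C) * R ^ ((1:ℝ)/2)) atTop atTop :=
    (tendsto_rpow_atTop (by norm_num)).const_mul_atTop (by positivity)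
  refine tendsto_atTop_mono' atTop ?_ hlim
  filter_upwards [eventually_ge_atTop (1:ℝ), eventually_ge_atTop eps] with R hR1 hRe
  have hkey := core d hd eps R heps hR1 hRe
  have hrw : h d R eps =
      ((R + eps) ^ d * incBeta (1 - R ^ 2 / (R + eps) ^ 2) a (((d : ℝ) + 1) / 2)
        - R ^ d * incBeta (1 - R ^ 2 / (R + eps) ^ 2) a (1 / 2)) / C := by
    rw [h, regBeta, ← hC_def]
    ring
  rw [hrw]
  rw [div_mul_eq_mul_div, div_le_div_iff_of_pos_right hC]
  exact hkey
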